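/- Let f : D̄ × ℝ → ℝ be continuous with continuous partial derivative D_u f, and let u, ū : D̄ → ℝ be continuous with u ≤ ū. Define U(x) = ((f(x, u(x)) − f(x, ū(x)))/(u(x) − ū(x)))^− when u(x) ≠ ū(x), and U(x) = (D_u f(x, u(x)))^− when u(x) = ū(x). Then U is continuous on D̄, and f(x, ū(x)) − f(x, u(x)) + U(x)(ū(x) − u(x)) ≥ 0 for all x ∈ D̄. -/
import Mathlib


/-- Construction of the continuous potential `U` in Lemma 3.7: with
`U(x)` defined as the negative part of the difference quotient of `f` between
`u(x)` and `ū(x)` (resp. of `D_u f(x, u(x))` when they coincide), `U` is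
continuous on the compact set `D` and
`f(x, ū(x)) - f(x, u(x)) + U(x)(ū(x) - u(x)) ≥ 0` on `D`. -/
theorem potential_negative_part_continuous {d : ℕ}
    (D : Set (EuclideanSpace ℝ (Fin d))) (hD : IsCompact D)
    (f fu : EuclideanSpace ℝ (Fin d) → ℝ → ℝ)
    (hf : Continuous (fun p : EuclideanSpace ℝ (Fin d) × ℝ => f p.1 p.2))
    (hfu : Continuous (fun p : EuclideanSpace ℝ (Fin d) × ℝ => fu p.1 p.2))
    (hderiv : ∀ x, ∀ q : ℝ, HasDerivAt (fun t => f x t) (fu x q) q)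
    (u v : EuclideanSpace ℝ (Fin d) → ℝ)
    (hu : ContinuousOn u D) (hv : ContinuousOn v D)
    (hle : ∀ x ∈ D, u x ≤ v x) :
    let U : EuclideanSpace ℝ (Fin d) → ℝ := fun x =>
      if u x ≠ v x then max (-((f x (u x) - f x (v x)) / (u x - v x))) 0
      else max (-(fu x (u x))) 0
    ContinuousOn U D ∧
    ∀ x ∈ D, 0 ≤ f x (v x) - f x (u x) + U x * (v x - u x) := by
  intro U
  -- the averaged derivative
  set G : EuclideanSpace ℝ (Fin d) → ℝ :=
    fun x => ∫ t in (0:ℝ)..1, fu x (u x + t * (v x - u x)) with hGdef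
  have hfux : ∀ x : EuclideanSpace ℝ (Fin d), Continuous (fun s => fu x s) := by
    intro x
    exact hfu.comp (continuous_const.prodMk continuous_id)
  have hftc : ∀ x : EuclideanSpace ℝ (Fin d),
      ∫ s in u x..v x, fu x s = f x (v x) - f x (u x) := by
    intro x
    exact intervalIntegral.integral_eq_sub_of_hasDerivAt (fun t _ => hderiv x t)
      ((hfux x).intervalIntegrable _ _)
  have key : ∀ x : EuclideanSpace ℝ (Fin d), U x = max (-(G x)) 0 := by
    intro x
    by_cases h : u x = v x
    · have : G x = fu x (u x) := by
        simp [hGdef, h]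
      simp [U, h, this]
    · have hc : v x - u x ≠ 0 := sub_ne_zero.mpr (Ne.symm h)
      have hG : G x = (v x - u x)⁻¹ * (f x (v x) - f x (u x)) := by
        have := intervalIntegral.integral_comp_mul_add (a := 0) (b := 1) (fun s => fu x s) hc (u x)
        simp only [hGdef]
        have heq : (fun t : ℝ => fu x (u x + t * (v x - u x)))
            = fun t : ℝ => fu x ((v x - u x) * t + u x) := by
          funext t; ring_nf
        rw [heq, this]
        simp [smul_eq_mul, hftc x]
      have hq : (f x (u x) - f x (v x)) / (u x - v x)
          = (v x - u x)⁻¹ * (f x (v x) - f x (u x)) := by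
        rw [div_eq_iff (sub_ne_zero.mpr h)]
        field_simp
        ring
      simp [U, h, hq, hG]
  constructor
  · -- continuity
    have hGcont : ContinuousOn G D := by
      rw [continuousOn_iff_continuous_restrict]
      have hu' : Continuous (D.restrict u) := continuousOn_iff_continuous_restrict.mp hu
      have hv' : Continuous (D.restrict v) := continuousOn_iff_continuous_restrict.mp hv
      have : Continuous fun p : ↥D × ℝ =>
          (fun (x : ↥D) (t : ℝ) => fu (x : EuclideanSpace ℝ (Fin d))
            (u x + t * (v x - u x))).uncurry p := by
        simp only [Function.uncurry]
        have h1 : Continuous fun p : ↥D × ℝ => u (p.1 : EuclideanSpace ℝ (Fin d)) :=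
          hu'.comp continuous_fst
        have h2 : Continuous fun p : ↥D × ℝ => v (p.1 : EuclideanSpace ℝ (Fin d)) :=
          hv'.comp continuous_fst
        exact hfu.comp ((continuous_subtype_val.comp continuous_fst).prodMk
          (h1.add (continuous_snd.mul (h2.sub h1))))
      exact intervalIntegral.continuous_parametric_intervalIntegral_of_continuous'
        this 0 1
    have : ContinuousOn (fun x => max (-(G x)) 0) D :=
      ((continuous_neg.max continuous_const).comp_continuousOn hGcont : _)
    exact this.congr fun x _ => key x
  · intro x hx
    rw [key x]
    by_cases h : u x = v x
    · simp [h]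
    · have hlt : u x < v x := lt_of_le_of_ne (hle x hx) h
      have h1 : -(G x) ≤ max (-(G x)) 0 := le_max_left _ _
      have h2 : G x * (v x - u x) = f x (v x) - f x (u x) := by
        have hc : v x - u x ≠ 0 := sub_ne_zero.mpr (Ne.symm h)
        have hG : G x = (v x - u x)⁻¹ * (f x (v x) - f x (u x)) := by
          have := intervalIntegral.integral_comp_mul_add (a := 0) (b := 1) (fun s => fu x s) hc (u x)
          simp only [hGdef]
          have heq : (fun t : ℝ => fu x (u x + t * (v x - u x)))
              = fun t : ℝ => fu x ((v x - u x) * t + u x) := by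
            funext t; ring_nf
          rw [heq, this]
          simp [smul_eq_mul, hftc x]
        rw [hG]
        field_simp
      nlinarith [mul_le_mul_of_nonneg_right h1 (le_of_lt (sub_pos.mpr hlt))]
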